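/- If A ⊆ Z/nZ satisfies that every element of Z/nZ has at most g ordered representations as a+b with a,b ∈ A, and g is odd, then |A| ≤ sqrt(1 − 1/g)·sqrt(g·n) + 1. -/

import Mathlib

lemma even_card_of_invol {α : Type*} [DecidableEq α] (s : Finset α) (f : α → α)
    (hmem : ∀ a ∈ s, f a ∈ s) (hinv : ∀ a ∈ s, f (f a) = a) (hfix : ∀ a ∈ s, f a ≠ a) :
    Even s.card := by
  induction s using Finset.strongInduction with
  | _ s ih =>
    rcases s.eq_empty_or_nonempty with rfl | ⟨a, ha⟩
    · simp
    · have hfa : f a ∈ s := hmem a ha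
      have hne : f a ≠ a := hfix a ha
      set t := s \ {a, f a} with ht
      have hsub : ({a, f a} : Finset α) ⊆ s := by
        intro x hx
        simp only [Finset.mem_insert, Finset.mem_singleton] at hx
        rcases hx with rfl | rfl <;> assumption
      have hts : t ⊂ s := by
        refine Finset.ssubset_iff_of_subset (Finset.sdiff_subset) |>.mpr ⟨a, ha, ?_⟩
        simp [ht]
      have hcard2 : ({a, f a} : Finset α).card = 2 := by
        rw [Finset.card_insert_of_notMem (by simpa using hne.symm)]
        simp
      have hcardt : t.card = s.card - 2 := by
        rw [ht, Finset.card_sdiff_of_subset hsub, hcard2]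
      have h2le : 2 ≤ s.card := hcard2 ▸ Finset.card_le_card hsub
      have hmemt : ∀ b ∈ t, b ∈ s ∧ b ≠ a ∧ b ≠ f a := by
        intro b hb
        simp only [ht, Finset.mem_sdiff, Finset.mem_insert, Finset.mem_singleton] at hb
        tauto
      have heven : Even t.card := by
        refine ih t hts (fun b hb => ?_) (fun b hb => hinv b (hmemt b hb).1)
          (fun b hb => hfix b (hmemt b hb).1)
        obtain ⟨hbs, hba, hbfa⟩ := hmemt b hb
        simp only [ht, Finset.mem_sdiff, Finset.mem_insert, Finset.mem_singleton]
        refine ⟨hmem b hbs, ?_⟩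
        rintro (h | h)
        · exact hbfa (by rw [← h, hinv b hbs])
        · have := hinv b hbs
          rw [h, hinv a ha] at this
          exact hba this.symm
      obtain ⟨c, hc⟩ := heven
      exact ⟨c + 1, by omega⟩

theorem b2g_mod_bound_odd (n g : ℕ) (hn : 0 < n) (hg : Odd g)
    (A : Finset (ZMod n))
    (hA : ∀ k : ZMod n, ((A ×ˢ A).filter fun p => p.1 + p.2 = k).card ≤ g) :
    (A.card : ℝ) ≤ Real.sqrt (1 - 1 / g) * Real.sqrt (g * n) + 1 := by
  haveI : NeZero n := ⟨hn.ne'⟩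
  have hg1 : 1 ≤ g := hg.pos
  set r : ZMod n → ℕ := fun k => ((A ×ˢ A).filter fun p => p.1 + p.2 = k).card with hr
  set B : Finset (ZMod n) := A.image (fun a => a + a) with hB
  have hsum : ∑ k, r k = A.card ^ 2 := by
    rw [sq, ← Finset.card_product]
    exact (Finset.card_eq_sum_card_fiberwise
      (f := fun p : ZMod n × ZMod n => p.1 + p.2) (fun x _ => Finset.mem_univ _)).symm
  have hkey : ∀ k, k ∉ B → r k ≤ g - 1 := by
    intro k hk
    have heven : Even (r k) := by
      apply even_card_of_invol _ Prod.swap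
      · intro p hp
        simp only [Finset.mem_filter, Finset.mem_product] at hp ⊢
        obtain ⟨⟨h1, h2⟩, h3⟩ := hp
        exact ⟨⟨h2, h1⟩, by simpa [add_comm] using h3⟩
      · intro p _; simp
      · intro p hp hfix
        simp only [Finset.mem_filter, Finset.mem_product] at hp
        obtain ⟨⟨h1, _⟩, h3⟩ := hp
        have : p.1 = p.2 := congrArg Prod.fst hfix.symm ▸ rfl
        have h12 : p.2 = p.1 := (Prod.ext_iff.mp hfix).1
        apply hk
        rw [hB, Finset.mem_image]
        exact ⟨p.1, h1, by rw [← h3, h12]⟩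
    have hle : r k ≤ g := hA k
    obtain ⟨c, hc⟩ := heven
    obtain ⟨d, hd⟩ := hg
    omega
  have hbound : A.card ^ 2 ≤ (g - 1) * n + A.card := by
    calc A.card ^ 2 = ∑ k, r k := hsum.symm
      _ ≤ ∑ k : ZMod n, ((g - 1) + if k ∈ B then 1 else 0) := by
          apply Finset.sum_le_sum
          intro k _
          by_cases hk : k ∈ B
          · simp only [hk, if_pos]
            have hle2 : r k ≤ g := hA k
            omega
          · simp only [hk, if_neg, not_false_iff, add_zero]
            exact hkey k hk
      _ = (g - 1) * n + B.card := by
          rw [Finset.sum_add_distrib, Finset.sum_const, Finset.card_univ, ZMod.card,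
            smul_eq_mul, mul_comm]
          congr 1
          simp [Finset.sum_ite_mem]
      _ ≤ (g - 1) * n + A.card := by
          have hBA : B.card ≤ A.card := hB ▸ Finset.card_image_le
          omega
  rcases Nat.eq_zero_or_pos A.card with hm | hm
  · rw [hm]
    push_cast
    positivity
  · have hgR : (0 : ℝ) < g := by positivity
    have hcast : ((g - 1 : ℕ) : ℝ) = (g : ℝ) - 1 := by
      push_cast [Nat.cast_sub hg1]; ring
    have hR : ((A.card : ℝ)) ^ 2 ≤ ((g : ℝ) - 1) * n + A.card := by
      have := hbound
      calc ((A.card : ℝ)) ^ 2 = ((A.card ^ 2 : ℕ) : ℝ) := by push_cast; ring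
        _ ≤ (((g - 1) * n + A.card : ℕ) : ℝ) := by exact_mod_cast this
        _ = ((g : ℝ) - 1) * n + A.card := by push_cast [Nat.cast_sub hg1]; ring
    have hm1 : (1 : ℝ) ≤ A.card := by exact_mod_cast hm
    have hsq : ((A.card : ℝ) - 1) ^ 2 ≤ ((g : ℝ) - 1) * n := by nlinarith
    have hle : (A.card : ℝ) - 1 ≤ Real.sqrt (((g : ℝ) - 1) * n) := by
      have h := Real.sqrt_le_sqrt hsq
      rwa [Real.sqrt_sq (by linarith)] at h
    have hg1R : (1 : ℝ) ≤ g := by exact_mod_cast hg1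
    have heq : Real.sqrt (1 - 1 / (g:ℝ)) * Real.sqrt ((g:ℝ) * n) = Real.sqrt (((g : ℝ) - 1) * n) := by
      rw [← Real.sqrt_mul (by rw [sub_nonneg]; exact div_le_one_of_le₀ hg1R (by positivity))]
      congr 1
      field_simp
    rw [heq]
    linarith
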